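/- (Causal effect preservation.) Let (Ω, 𝓕, μ) be a probability space, T_rct, T_synth : Ω → Bool measurable, and Y0, Y1 : Ω → ℝ integrable. Suppose T_rct is independent of the triple ω ↦ (T_synth ω, Y0 ω, Y1 ω) under μ and μ({ω | T_rct ω = true}) = 1/2. Define the observed outcome Y ω = if T_rct ω then Y1 ω else Y0 ω and the acceptance event A = {ω | T_rct ω = T_synth ω}. Then the population average treatment effect in the accepted population equals the RCT average treatment effect: ∫ (Y1 − Y0) d(ProbabilityTheory.cond μ A) = ∫ Y d(ProbabilityTheory.cond μ {T_rct = true}) − ∫ Y d(ProbabilityTheory.cond μ {T_rct = false}). -/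

import Mathlib

open MeasureTheory ProbabilityTheory

lemma aux_indep_setIntegral {Ω : Type*} [MeasurableSpace Ω]
    (μ : Measure Ω) (T : Ω → Bool) (X : Ω → Bool × ℝ × ℝ) (hT : Measurable T)
    (hindep : IndepFun T X μ) (t : Bool) (g : Bool × ℝ × ℝ → ℝ)
    (hg : Measurable g) (hgX : AEStronglyMeasurable (fun ω => g (X ω)) μ) :
    ∫ ω in {ω | T ω = t}, g (X ω) ∂μ
      = (μ {ω | T ω = t}).toReal * ∫ ω, g (X ω) ∂μ := by
  have hset : MeasurableSet {ω | T ω = t} := hT (measurableSet_singleton t)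
  have hφ : Measurable (fun b : Bool => if b = t then (1:ℝ) else 0) := by
    exact measurable_of_countable _
  have h1 : IndepFun (fun ω => (if T ω = t then (1:ℝ) else 0)) (fun ω => g (X ω)) μ :=
    hindep.comp hφ hg
  have h2 := h1.integral_mul_eq_mul_integral ((hφ.comp hT).aestronglyMeasurable) hgX
  have h3 : (fun ω => (if T ω = t then (1:ℝ) else 0)) * (fun ω => g (X ω))
      = {ω | T ω = t}.indicator (fun ω => g (X ω)) := by
    ext ω
    by_cases h : T ω = t <;> simp [h, Set.indicator_apply]
  have h4 : ∫ ω, (if T ω = t then (1:ℝ) else 0) ∂μ = (μ {ω | T ω = t}).toReal := by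
    have : (fun ω => (if T ω = t then (1:ℝ) else 0))
        = {ω | T ω = t}.indicator (fun _ => (1:ℝ)) := by
      ext ω; by_cases h : T ω = t <;> simp [h, Set.indicator_apply]
    rw [this, integral_indicator_const (1:ℝ) hset, smul_eq_mul, mul_one, measureReal_def]
  rw [h3] at h2
  rw [← integral_indicator hset, h2, h4]

theorem causal_effect_preservation {Ω : Type*} [MeasurableSpace Ω]
    (μ : Measure Ω) [IsProbabilityMeasure μ]
    (Trct Tsynth : Ω → Bool) (Y0 Y1 : Ω → ℝ)
    (hTrct : Measurable Trct) (hTsynth : Measurable Tsynth)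
    (hY0 : Integrable Y0 μ) (hY1 : Integrable Y1 μ)
    (hindep : IndepFun Trct (fun ω => (Tsynth ω, Y0 ω, Y1 ω)) μ)
    (hbal : μ {ω | Trct ω = true} = 1/2) :
    ∫ ω, (Y1 ω - Y0 ω) ∂(ProbabilityTheory.cond μ {ω | Trct ω = Tsynth ω})
      = (∫ ω, (if Trct ω then Y1 ω else Y0 ω)
            ∂(ProbabilityTheory.cond μ {ω | Trct ω = true}))
        - (∫ ω, (if Trct ω then Y1 ω else Y0 ω)
            ∂(ProbabilityTheory.cond μ {ω | Trct ω = false})) := by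
  classical
  set X : Ω → Bool × ℝ × ℝ := fun ω => (Tsynth ω, Y0 ω, Y1 ω) with hXdef
  have hAt : MeasurableSet {ω | Trct ω = true} := hTrct (measurableSet_singleton true)
  have hAf : MeasurableSet {ω | Trct ω = false} := hTrct (measurableSet_singleton false)
  have hSt : MeasurableSet {ω | Tsynth ω = true} := hTsynth (measurableSet_singleton true)
  have hSf : MeasurableSet {ω | Tsynth ω = false} := hTsynth (measurableSet_singleton false)
  have hcompl : {ω | Trct ω = false} = {ω | Trct ω = true}ᶜ := by
    ext ω; simp
  have hbalf : μ {ω | Trct ω = false} = 1/2 := by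
    rw [hcompl, measure_compl hAt (measure_ne_top μ _), hbal, measure_univ]
    exact ENNReal.sub_half ENNReal.one_ne_top
  have hScompl : {ω | Tsynth ω = false} = {ω | Tsynth ω = true}ᶜ := by
    ext ω; simp
  have hSsum : μ {ω | Tsynth ω = true} + μ {ω | Tsynth ω = false} = 1 := by
    rw [hScompl, measure_add_measure_compl hSt]; exact measure_univ
  -- RHS true term
  have hRt : ∫ ω, (if Trct ω then Y1 ω else Y0 ω) ∂(μ[|{ω | Trct ω = true}])
      = ∫ ω, Y1 ω ∂μ := by
    rw [ProbabilityTheory.cond, integral_smul_measure]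
    have he : ∫ ω in {ω | Trct ω = true}, (if Trct ω then Y1 ω else Y0 ω) ∂μ
        = ∫ ω in {ω | Trct ω = true}, Y1 ω ∂μ := by
      refine setIntegral_congr_fun hAt (fun ω hω => ?_)
      simp [Set.mem_setOf_eq.mp hω]
    rw [he]
    have := aux_indep_setIntegral μ Trct X hTrct hindep true (fun p => p.2.2)
      (measurable_snd.snd) (by exact hY1.aestronglyMeasurable)
    simp only [hXdef] at this
    rw [this, hbal]
    simp [ENNReal.toReal_inv]
  have hRf : ∫ ω, (if Trct ω then Y1 ω else Y0 ω) ∂(μ[|{ω | Trct ω = false}])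
      = ∫ ω, Y0 ω ∂μ := by
    rw [ProbabilityTheory.cond, integral_smul_measure]
    have he : ∫ ω in {ω | Trct ω = false}, (if Trct ω then Y1 ω else Y0 ω) ∂μ
        = ∫ ω in {ω | Trct ω = false}, Y0 ω ∂μ := by
      refine setIntegral_congr_fun hAf (fun ω hω => ?_)
      simp [Set.mem_setOf_eq.mp hω]
    rw [he]
    have := aux_indep_setIntegral μ Trct X hTrct hindep false (fun p => p.2.1)
      (measurable_snd.fst) (by exact hY0.aestronglyMeasurable)
    simp only [hXdef] at this
    rw [this, hbalf]
    simp [ENNReal.toReal_inv]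
  -- acceptance event
  have hAdecomp : {ω | Trct ω = Tsynth ω}
      = ({ω | Trct ω = true} ∩ {ω | Tsynth ω = true})
        ∪ ({ω | Trct ω = false} ∩ {ω | Tsynth ω = false}) := by
    ext ω
    simp only [Set.mem_setOf_eq, Set.mem_union, Set.mem_inter_iff]
    cases h1 : Trct ω <;> cases h2 : Tsynth ω <;> simp
  have hprod : ∀ s t : Bool, μ ({ω | Trct ω = s} ∩ {ω | Tsynth ω = t})
      = μ {ω | Trct ω = s} * μ {ω | Tsynth ω = t} := by
    intro s t
    have h := hindep.measure_inter_preimage_eq_mul {s} (Set.prod {t} Set.univ)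
      (measurableSet_singleton s) ((measurableSet_singleton t).prod MeasurableSet.univ)
    have e1 : Trct ⁻¹' {s} = {ω | Trct ω = s} := rfl
    have e2 : X ⁻¹' (Set.prod {t} Set.univ) = {ω | Tsynth ω = t} := by
      ext ω
      show Tsynth ω ∈ ({t} : Set Bool) ∧ (Y0 ω, Y1 ω) ∈ (Set.univ : Set (ℝ × ℝ)) ↔ _
      simp
    rw [e1, e2] at h
    exact h
  have hmuA : μ {ω | Trct ω = Tsynth ω} = 1/2 := by
    rw [hAdecomp, measure_union ?_ (hAf.inter hSf), hprod, hprod, hbal, hbalf,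
      ← mul_add, hSsum, mul_one]
    · exact (Set.disjoint_left.mpr (fun ω h1 h2 => by
        simp only [Set.mem_inter_iff, Set.mem_setOf_eq] at h1 h2
        rw [h1.1] at h2; exact Bool.noConfusion h2.1))
  have hAmeas : MeasurableSet {ω | Trct ω = Tsynth ω} := by
    rw [hAdecomp]; exact (hAt.inter hSt).union (hAf.inter hSf)
  -- LHS
  have hLset : ∫ ω in {ω | Trct ω = Tsynth ω}, (Y1 ω - Y0 ω) ∂μ
      = (1/2) * ∫ ω, (Y1 ω - Y0 ω) ∂μ := by
    have hdisj : Disjoint ({ω | Trct ω = true} ∩ {ω | Tsynth ω = true})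
        ({ω | Trct ω = false} ∩ {ω | Tsynth ω = false}) :=
      Set.disjoint_left.mpr (fun ω h1 h2 => by
        simp only [Set.mem_inter_iff, Set.mem_setOf_eq] at h1 h2
        rw [h1.1] at h2; exact Bool.noConfusion h2.1)
    have hint : Integrable (fun ω => Y1 ω - Y0 ω) μ := hY1.sub hY0
    rw [hAdecomp, setIntegral_union hdisj (hAf.inter hSf) hint.integrableOn hint.integrableOn]
    have e1 : ∫ ω in {ω | Trct ω = true} ∩ {ω | Tsynth ω = true}, (Y1 ω - Y0 ω) ∂μ
        = ∫ ω in {ω | Trct ω = true}, {ω | Tsynth ω = true}.indicator (fun ω => Y1 ω - Y0 ω) ω ∂μ :=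
      (setIntegral_indicator hSt).symm
    have e2 : ∫ ω in {ω | Trct ω = false} ∩ {ω | Tsynth ω = false}, (Y1 ω - Y0 ω) ∂μ
        = ∫ ω in {ω | Trct ω = false}, {ω | Tsynth ω = false}.indicator (fun ω => Y1 ω - Y0 ω) ω ∂μ :=
      (setIntegral_indicator hSf).symm
    rw [e1, e2]
    have hg : ∀ t : Bool, Measurable (fun p : Bool × ℝ × ℝ => if p.1 = t then p.2.2 - p.2.1 else 0) := by
      intro t
      exact Measurable.ite (measurable_fst (measurableSet_singleton t))
        (measurable_snd.snd.sub measurable_snd.fst) measurable_const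
    have hgX : ∀ t : Bool, AEStronglyMeasurable
        (fun ω => if Tsynth ω = t then Y1 ω - Y0 ω else 0) μ := by
      intro t
      have : (fun ω => if Tsynth ω = t then Y1 ω - Y0 ω else 0)
          = {ω | Tsynth ω = t}.indicator (fun ω => Y1 ω - Y0 ω) := by
        ext ω; by_cases h : Tsynth ω = t <;> simp [h, Set.indicator_apply]
      rw [this]
      exact (hY1.sub hY0).aestronglyMeasurable.indicator (hTsynth (measurableSet_singleton t))
    have key : ∀ t : Bool, ∫ ω in {ω | Trct ω = t},
        {ω | Tsynth ω = t}.indicator (fun ω => Y1 ω - Y0 ω) ω ∂μ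
        = (μ {ω | Trct ω = t}).toReal * ∫ ω, (if Tsynth ω = t then Y1 ω - Y0 ω else 0) ∂μ := by
      intro t
      have := aux_indep_setIntegral μ Trct X hTrct hindep t
        (fun p => if p.1 = t then p.2.2 - p.2.1 else 0) (hg t) (hgX t)
      simp only [hXdef] at this
      rw [← this]
      refine setIntegral_congr_fun (hTrct (measurableSet_singleton t)) (fun ω _ => ?_)
      by_cases h : Tsynth ω = t <;> simp [h, Set.indicator_apply]
    rw [key true, key false, hbal, hbalf]
    have hind : ∀ t : Bool, Integrable (fun ω => if Tsynth ω = t then Y1 ω - Y0 ω else 0) μ := by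
      intro t
      have : (fun ω => if Tsynth ω = t then Y1 ω - Y0 ω else 0)
          = {ω | Tsynth ω = t}.indicator (fun ω => Y1 ω - Y0 ω) := by
        ext ω; by_cases h : Tsynth ω = t <;> simp [h, Set.indicator_apply]
      rw [this]
      exact (hY1.sub hY0).indicator (hTsynth (measurableSet_singleton t))
    rw [← mul_add, ← integral_add (hind true) (hind false)]
    have : (fun ω => (if Tsynth ω = true then Y1 ω - Y0 ω else 0)
        + (if Tsynth ω = false then Y1 ω - Y0 ω else 0)) = fun ω => Y1 ω - Y0 ω := by
      ext ω; cases h : Tsynth ω <;> simp [h]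
    simp only [this]
    norm_num
  rw [hRt, hRf, ProbabilityTheory.cond, integral_smul_measure, hmuA, hLset,
    integral_sub hY1 hY0]
  simp [ENNReal.toReal_inv]
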